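/- Let b ≥ 1 and c ≥ 0 be integers, and let D be a graded subalgebra of ℂ⟨u,v⟩ that is permutation-closed (closed under Koryukin's action on each homogeneous component) and contains the elements uv + vu and u^b v^c + v^b u^c. Then D also contains u·v·u^b·v^c + v·u·v^b·u^c, and consequently u^{b+1} v^{c+1} + v^{b+1} u^{c+1} ∈ D. -/

import Mathlib

open scoped Real

noncomputable section

/-- Words in two letters. -/
abbrev FW := FreeMonoid (Fin 2)

/-- The free associative unital ℂ-algebra on two generators. -/
abbrev FA := MonoidAlgebra ℂ FW

/-- The generator `u`. -/
def gu : FA := MonoidAlgebra.of ℂ FW (FreeMonoid.of 0)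

/-- The generator `v`. -/
def gv : FA := MonoidAlgebra.of ℂ FW (FreeMonoid.of 1)

/-- The algebra endomorphism `ρ` with `ρ(u) = ξ u`, `ρ(v) = ξ⁻¹ v`, `ξ = exp(2πi/n)`. -/
def dRho (n : ℕ) : FA →ₐ[ℂ] FA :=
  MonoidAlgebra.lift ℂ FA FW
    (FreeMonoid.lift fun i : Fin 2 =>
      if i = 0 then Complex.exp (2 * Real.pi * Complex.I / n) • gu
      else (Complex.exp (2 * Real.pi * Complex.I / n))⁻¹ • gv)

/-- The algebra endomorphism `τ` exchanging `u` and `v`. -/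
def dTau : FA →ₐ[ℂ] FA :=
  MonoidAlgebra.lift ℂ FA FW
    (FreeMonoid.lift fun i : Fin 2 => if i = 0 then gv else gu)

/-- The invariant algebra `ℂ⟨u,v⟩^{D_{2n}}`. -/
def invAlg (n : ℕ) : Subalgebra ℂ FA :=
  AlgHom.equalizer (dRho n) (AlgHom.id ℂ FA) ⊓ AlgHom.equalizer dTau (AlgHom.id ℂ FA)

/-- The degree-`j` homogeneous component of `ℂ⟨u,v⟩`: the span of words of length `j`. -/
def degComp (j : ℕ) : Submodule ℂ FA :=
  MonoidAlgebra.supported ℂ ℂ {w : FW | FreeMonoid.length w = j}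

/-- Koryukin's position permutation on words: if `w` has length `k`, the `i`-th letter of
`w ∘ σ` is the `σ⁻¹(i)`-th letter of `w`; words of other lengths are left unchanged. -/
def wordPerm (k : ℕ) (σ : Equiv.Perm (Fin k)) (w : FW) : FW :=
  if h : (FreeMonoid.toList w).length = k then
    FreeMonoid.ofList
      (List.ofFn fun i : Fin k => (FreeMonoid.toList w).get (finCongr h.symm (σ⁻¹ i)))
  else w

/-- Koryukin's action of `Sym(k)`, extended ℂ-linearly. -/
def koryukin (k : ℕ) (σ : Equiv.Perm (Fin k)) : FA →ₗ[ℂ] FA :=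
  MonoidAlgebra.mapDomainLinearMap ℂ ℂ (wordPerm k σ)

/-- A subalgebra is graded if it contains every homogeneous component of each of
its elements. -/
def IsGradedSub (D : Subalgebra ℂ FA) : Prop :=
  ∀ f ∈ D, ∀ j : ℕ, MonoidAlgebra.ofCoeff (Finsupp.filter (fun w : FW => FreeMonoid.length w = j) f.coeff) ∈ D

/-- A subalgebra is permutation-closed if it is closed under Koryukin's action on
homogeneous elements. -/
def PermClosed (D : Subalgebra ℂ FA) : Prop :=
  ∀ (k : ℕ) (σ : Equiv.Perm (Fin k)), ∀ f ∈ D, f ∈ degComp k → koryukin k σ f ∈ D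

-- infrastructure
lemma aux_of_pow (x : Fin 2) (n : ℕ) :
    (FreeMonoid.of x : FW) ^ n = FreeMonoid.ofList (List.replicate n x) := by
  induction n with
  | zero => rfl
  | succ n ih => rw [pow_succ', ih, List.replicate_succ]; rfl

lemma aux_wordPerm_ofFn {k : ℕ} (σ : Equiv.Perm (Fin k)) (g : Fin k → Fin 2) :
    wordPerm k σ (FreeMonoid.ofList (List.ofFn g))
      = FreeMonoid.ofList (List.ofFn fun i => g (σ⁻¹ i)) := by
  unfold wordPerm
  rw [dif_pos (by simp)]
  congr 1
  refine congrArg List.ofFn (funext fun i => ?_)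
  simp only [FreeMonoid.toList_ofList, List.get_ofFn]
  congr 1

def Wd {k : ℕ} (g : Fin k → Fin 2) : FA :=
  MonoidAlgebra.single (FreeMonoid.ofList (List.ofFn g)) 1

lemma aux_kor {k : ℕ} (σ : Equiv.Perm (Fin k)) (g : Fin k → Fin 2) :
    koryukin k σ (Wd g) = Wd (fun i => g (σ⁻¹ i)) := by
  show MonoidAlgebra.mapDomainLinearMap ℂ ℂ (wordPerm k σ) (MonoidAlgebra.single _ 1) = _
  rw [MonoidAlgebra.mapDomainLinearMap_single, aux_wordPerm_ofFn]
  rfl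

lemma Wd_mem {k : ℕ} (g : Fin k → Fin 2) : Wd g ∈ degComp k :=
  Finsupp.single_mem_supported ℂ (1 : ℂ) (List.length_ofFn (f := g))

lemma list_eq_ofFn {k : ℕ} (l : List (Fin 2)) (g : Fin k → Fin 2) (h1 : l.length = k)
    (h2 : ∀ (i : ℕ) (hi : i < k), l[i]'(by omega) = g ⟨i, hi⟩) : l = List.ofFn g := by
  apply List.ext_getElem (by simpa using h1)
  intro i hi hi'
  simpa using h2 i (by simpa using hi')

-- the word functions
def tmpl (b c : ℕ) (p q r s : Fin 2) : Fin (b + c + 2) → Fin 2 := fun i =>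
  if i.val = 0 then p else if i.val = 1 then q else if i.val < b + 2 then r else s
def ghA (b c : ℕ) : Fin (b + c + 2) → Fin 2 := fun i =>
  if i.val = 2 then 1 else if i.val < b + 2 then 0 else 1
def ghE (b c : ℕ) : Fin (b + c + 2) → Fin 2 := fun i =>
  if i.val = 2 then 0 else if i.val < b + 2 then 1 else 0
def gtA (b c : ℕ) : Fin (b + c + 2) → Fin 2 := fun i => if i.val < b + 1 then 0 else 1
def gtE (b c : ℕ) : Fin (b + c + 2) → Fin 2 := fun i => if i.val < b + 1 then 1 else 0

-- products as single words
lemma prodW (b c : ℕ) (p q r s : Fin 2) :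
    (MonoidAlgebra.of ℂ FW (FreeMonoid.of p) * MonoidAlgebra.of ℂ FW (FreeMonoid.of q)) *
      ((MonoidAlgebra.of ℂ FW (FreeMonoid.of r)) ^ b *
        (MonoidAlgebra.of ℂ FW (FreeMonoid.of s)) ^ c)
      = Wd (tmpl b c p q r s) := by
  simp only [MonoidAlgebra.of_apply, MonoidAlgebra.single_pow,
    MonoidAlgebra.single_mul_single, one_mul, one_pow, Wd]
  congr 1
  rw [aux_of_pow, aux_of_pow]
  show FreeMonoid.ofList (p :: q :: (List.replicate b r ++ List.replicate c s)) = _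
  refine congrArg FreeMonoid.ofList (list_eq_ofFn _ _
    (by simp only [List.length_cons, List.length_append, List.length_replicate]) ?_)
  intro i hi
  unfold tmpl
  rcases i with _ | _ | i
  · simp
  · simp
  · simp only [List.getElem_cons_succ, List.getElem_append, List.getElem_replicate,
      List.length_replicate]
    rw [if_neg (by omega), if_neg (by omega)]
    by_cases h : i < b
    · rw [dif_pos h, if_pos (by omega)]
    · rw [dif_neg h, if_neg (by omega)]

lemma prodT (b c : ℕ) (x y : Fin 2) :
    (MonoidAlgebra.of ℂ FW (FreeMonoid.of x) : FA) ^ (b + 1) *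
      (MonoidAlgebra.of ℂ FW (FreeMonoid.of y)) ^ (c + 1)
      = Wd (fun i : Fin (b + c + 2) => if i.val < b + 1 then x else y) := by
  simp only [MonoidAlgebra.of_apply, MonoidAlgebra.single_pow,
    MonoidAlgebra.single_mul_single, one_pow, one_mul, Wd]
  congr 1
  rw [aux_of_pow, aux_of_pow]
  show FreeMonoid.ofList (List.replicate (b+1) x ++ List.replicate (c+1) y) = _
  refine congrArg FreeMonoid.ofList (list_eq_ofFn _ _
    (by simp only [List.length_append, List.length_replicate]; omega) ?_)
  intro i hi
  simp only [List.getElem_append, List.getElem_replicate, List.length_replicate]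
  split_ifs <;> first | rfl | (exfalso; omega)

-- permutations
def tau12 (b c : ℕ) (hb : 1 ≤ b) : Equiv.Perm (Fin (b + c + 2)) :=
  Function.Involutive.toPerm
    (fun i => ⟨if i.val = 1 then 2 else if i.val = 2 then 1 else i.val, by
      have := i.isLt; split_ifs <;> omega⟩)
    (fun i => by
      have := i.isLt; ext; dsimp only; split_ifs <;> first | contradiction | omega)

def tau01 (b c : ℕ) : Equiv.Perm (Fin (b + c + 2)) :=
  Function.Involutive.toPerm
    (fun i => ⟨if i.val = 0 then 1 else if i.val = 1 then 0 else i.val, by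
      have := i.isLt; split_ifs <;> omega⟩)
    (fun i => by
      have := i.isLt; ext; dsimp only; split_ifs <;> first | contradiction | omega)

def cyc (b c : ℕ) : Equiv.Perm (Fin (b + c + 2)) where
  toFun i := ⟨if i.val = 1 then b + 1 else if 2 ≤ i.val ∧ i.val ≤ b + 1 then i.val - 1 else i.val,
    by have := i.isLt; split_ifs <;> omega⟩
  invFun i := ⟨if i.val = b + 1 then 1 else if 1 ≤ i.val ∧ i.val ≤ b then i.val + 1 else i.val,
    by have := i.isLt; split_ifs <;> omega⟩
  left_inv i := by have := i.isLt; ext; dsimp only; split_ifs <;> first | contradiction | omega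
  right_inv i := by have := i.isLt; ext; dsimp only; split_ifs <;> first | contradiction | omega

-- composition lemmas
lemma compA12 (b c : ℕ) (hb : 1 ≤ b) :
    (fun i => tmpl b c 0 1 0 1 ((tau12 b c hb)⁻¹ i)) = ghA b c := by
  funext i
  have hi := i.isLt
  simp only [tau12, Equiv.Perm.inv_def, Function.Involutive.toPerm_symm,
    Function.Involutive.coe_toPerm, Function.Involutive.toPerm, Equiv.coe_fn_symm_mk, tmpl, ghA]
  split_ifs <;> first | rfl | contradiction | (exfalso; omega)

lemma compE12 (b c : ℕ) (hb : 1 ≤ b) :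
    (fun i => tmpl b c 1 0 1 0 ((tau12 b c hb)⁻¹ i)) = ghE b c := by
  funext i
  have hi := i.isLt
  simp only [tau12, Equiv.Perm.inv_def, Function.Involutive.toPerm_symm,
    Function.Involutive.coe_toPerm, Function.Involutive.toPerm, Equiv.coe_fn_symm_mk, tmpl, ghE]
  split_ifs <;> first | rfl | contradiction | (exfalso; omega)

lemma compB12 (b c : ℕ) (hb : 1 ≤ b) :
    (fun i => tmpl b c 0 1 1 0 ((tau12 b c hb)⁻¹ i)) = tmpl b c 0 1 1 0 := by
  funext i
  have hi := i.isLt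
  simp only [tau12, Equiv.Perm.inv_def, Function.Involutive.toPerm_symm,
    Function.Involutive.coe_toPerm, Function.Involutive.toPerm, Equiv.coe_fn_symm_mk, tmpl]
  split_ifs <;> first | rfl | contradiction | (exfalso; omega)

lemma compC12 (b c : ℕ) (hb : 1 ≤ b) :
    (fun i => tmpl b c 1 0 0 1 ((tau12 b c hb)⁻¹ i)) = tmpl b c 1 0 0 1 := by
  funext i
  have hi := i.isLt
  simp only [tau12, Equiv.Perm.inv_def, Function.Involutive.toPerm_symm,
    Function.Involutive.coe_toPerm, Function.Involutive.toPerm, Equiv.coe_fn_symm_mk, tmpl]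
  split_ifs <;> first | rfl | contradiction | (exfalso; omega)

lemma compA01 (b c : ℕ) (hb : 1 ≤ b) :
    (fun i => tmpl b c 0 1 0 1 ((tau01 b c)⁻¹ i)) = tmpl b c 1 0 0 1 := by
  funext i
  have hi := i.isLt
  simp only [tau01, Equiv.Perm.inv_def, Function.Involutive.toPerm_symm,
    Function.Involutive.coe_toPerm, Function.Involutive.toPerm, Equiv.coe_fn_symm_mk, tmpl]
  split_ifs <;> first | rfl | contradiction | (exfalso; omega)

lemma compE01 (b c : ℕ) (hb : 1 ≤ b) :
    (fun i => tmpl b c 1 0 1 0 ((tau01 b c)⁻¹ i)) = tmpl b c 0 1 1 0 := by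
  funext i
  have hi := i.isLt
  simp only [tau01, Equiv.Perm.inv_def, Function.Involutive.toPerm_symm,
    Function.Involutive.coe_toPerm, Function.Involutive.toPerm, Equiv.coe_fn_symm_mk, tmpl]
  split_ifs <;> first | rfl | contradiction | (exfalso; omega)

lemma compGA01 (b c : ℕ) (hb : 1 ≤ b) :
    (fun i => ghA b c ((tau01 b c)⁻¹ i)) = ghA b c := by
  funext i
  have hi := i.isLt
  simp only [tau01, Equiv.Perm.inv_def, Function.Involutive.toPerm_symm,
    Function.Involutive.coe_toPerm, Function.Involutive.toPerm, Equiv.coe_fn_symm_mk, ghA]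
  split_ifs <;> first | rfl | contradiction | (exfalso; omega)

lemma compGE01 (b c : ℕ) (hb : 1 ≤ b) :
    (fun i => ghE b c ((tau01 b c)⁻¹ i)) = ghE b c := by
  funext i
  have hi := i.isLt
  simp only [tau01, Equiv.Perm.inv_def, Function.Involutive.toPerm_symm,
    Function.Involutive.coe_toPerm, Function.Involutive.toPerm, Equiv.coe_fn_symm_mk, ghE]
  split_ifs <;> first | rfl | contradiction | (exfalso; omega)

lemma compAcyc (b c : ℕ) (hb : 1 ≤ b) :
    (fun i => tmpl b c 0 1 0 1 ((cyc b c)⁻¹ i)) = gtA b c := by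
  funext i
  have hi := i.isLt
  simp only [cyc, Equiv.Perm.inv_def, Equiv.coe_fn_symm_mk, tmpl, gtA]
  split_ifs <;> first | rfl | contradiction | (exfalso; omega)

lemma compEcyc (b c : ℕ) (hb : 1 ≤ b) :
    (fun i => tmpl b c 1 0 1 0 ((cyc b c)⁻¹ i)) = gtE b c := by
  funext i
  have hi := i.isLt
  simp only [cyc, Equiv.Perm.inv_def, Equiv.coe_fn_symm_mk, tmpl, gtE]
  split_ifs <;> first | rfl | contradiction | (exfalso; omega)

/-- Inductive step: a graded permutation-closed subalgebra containing `uv + vu` and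
`u^b v^c + v^b u^c` also contains `uvu^b v^c + vuv^b u^c`, and hence
`u^{b+1} v^{c+1} + v^{b+1} u^{c+1}`. -/
theorem perm_closed_step (b c : ℕ) (hb : 1 ≤ b) (D : Subalgebra ℂ FA)
    (hgraded : IsGradedSub D) (hperm : PermClosed D)
    (h1 : gu * gv + gv * gu ∈ D) (h2 : gu ^ b * gv ^ c + gv ^ b * gu ^ c ∈ D) :
    gu * gv * gu ^ b * gv ^ c + gv * gu * gv ^ b * gu ^ c ∈ D ∧
      gu ^ (b + 1) * gv ^ (c + 1) + gv ^ (b + 1) * gu ^ (c + 1) ∈ D := by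
  have hf2 : (gu * gv + gv * gu) * (gu ^ b * gv ^ c + gv ^ b * gu ^ c)
      = Wd (tmpl b c 0 1 0 1) + Wd (tmpl b c 0 1 1 0)
        + Wd (tmpl b c 1 0 0 1) + Wd (tmpl b c 1 0 1 0) := by
    unfold gu gv
    rw [mul_add, add_mul, add_mul, prodW, prodW, prodW, prodW]
    abel
  have hfD : Wd (tmpl b c 0 1 0 1) + Wd (tmpl b c 0 1 1 0)
      + Wd (tmpl b c 1 0 0 1) + Wd (tmpl b c 1 0 1 0) ∈ D := hf2 ▸ D.mul_mem h1 h2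
  have hfdeg : Wd (tmpl b c 0 1 0 1) + Wd (tmpl b c 0 1 1 0)
      + Wd (tmpl b c 1 0 0 1) + Wd (tmpl b c 1 0 1 0) ∈ degComp (b + c + 2) :=
    add_mem (add_mem (add_mem (Wd_mem _) (Wd_mem _)) (Wd_mem _)) (Wd_mem _)
  have t1D := hperm _ (tau12 b c hb) _ hfD hfdeg
  rw [map_add, map_add, map_add, aux_kor, aux_kor, aux_kor, aux_kor,
    compA12 b c hb, compB12 b c hb, compC12 b c hb, compE12 b c hb] at t1D
  have hgD : Wd (tmpl b c 0 1 0 1) + Wd (tmpl b c 1 0 1 0)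
      - Wd (ghA b c) - Wd (ghE b c) ∈ D := by
    have h := D.toSubring.sub_mem hfD t1D
    have e : Wd (tmpl b c 0 1 0 1) + Wd (tmpl b c 0 1 1 0)
        + Wd (tmpl b c 1 0 0 1) + Wd (tmpl b c 1 0 1 0)
        - (Wd (ghA b c) + Wd (tmpl b c 0 1 1 0) + Wd (tmpl b c 1 0 0 1) + Wd (ghE b c))
        = Wd (tmpl b c 0 1 0 1) + Wd (tmpl b c 1 0 1 0) - Wd (ghA b c) - Wd (ghE b c) := by
      abel
    rwa [e] at h
  have hgdeg : Wd (tmpl b c 0 1 0 1) + Wd (tmpl b c 1 0 1 0)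
      - Wd (ghA b c) - Wd (ghE b c) ∈ degComp (b + c + 2) :=
    sub_mem (sub_mem (add_mem (Wd_mem _) (Wd_mem _)) (Wd_mem _)) (Wd_mem _)
  have t2D := hperm _ (tau01 b c) _ hgD hgdeg
  rw [map_sub, map_sub, map_add, aux_kor, aux_kor, aux_kor, aux_kor,
    compA01 b c hb, compE01 b c hb, compGA01 b c hb, compGE01 b c hb] at t2D
  have hHD : Wd (ghA b c) + Wd (ghE b c) ∈ D := by
    have h3 := D.toSubring.sub_mem (D.toSubring.sub_mem hfD hgD) t2D
    have e : Wd (tmpl b c 0 1 0 1) + Wd (tmpl b c 0 1 1 0)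
        + Wd (tmpl b c 1 0 0 1) + Wd (tmpl b c 1 0 1 0)
        - (Wd (tmpl b c 0 1 0 1) + Wd (tmpl b c 1 0 1 0) - Wd (ghA b c) - Wd (ghE b c))
        - (Wd (tmpl b c 1 0 0 1) + Wd (tmpl b c 0 1 1 0) - Wd (ghA b c) - Wd (ghE b c))
        = (2 : ℂ) • (Wd (ghA b c) + Wd (ghE b c)) := by
      rw [two_smul]; abel
    rw [e] at h3
    have h4 := D.smul_mem h3 ((2 : ℂ)⁻¹)
    rwa [smul_smul, inv_mul_cancel₀ two_ne_zero, one_smul] at h4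
  have hsD : Wd (tmpl b c 0 1 0 1) + Wd (tmpl b c 1 0 1 0) ∈ D := by
    have h := D.add_mem hgD hHD
    have e : Wd (tmpl b c 0 1 0 1) + Wd (tmpl b c 1 0 1 0)
        - Wd (ghA b c) - Wd (ghE b c) + (Wd (ghA b c) + Wd (ghE b c))
        = Wd (tmpl b c 0 1 0 1) + Wd (tmpl b c 1 0 1 0) := by abel
    rwa [e] at h
  have e1 : gu * gv * gu ^ b * gv ^ c = Wd (tmpl b c 0 1 0 1) := by
    unfold gu gv
    rw [mul_assoc (MonoidAlgebra.of ℂ FW (FreeMonoid.of 0) * MonoidAlgebra.of ℂ FW (FreeMonoid.of 1))]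
    exact prodW b c 0 1 0 1
  have e4 : gv * gu * gv ^ b * gu ^ c = Wd (tmpl b c 1 0 1 0) := by
    unfold gu gv
    rw [mul_assoc (MonoidAlgebra.of ℂ FW (FreeMonoid.of 1) * MonoidAlgebra.of ℂ FW (FreeMonoid.of 0))]
    exact prodW b c 1 0 1 0
  refine ⟨by rw [e1, e4]; exact hsD, ?_⟩
  have t3D := hperm _ (cyc b c) _ hsD (add_mem (Wd_mem _) (Wd_mem _))
  rw [map_add, aux_kor, aux_kor, compAcyc b c hb, compEcyc b c hb] at t3D
  have e5 : gu ^ (b + 1) * gv ^ (c + 1) = Wd (gtA b c) := by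
    unfold gu gv gtA; exact prodT b c 0 1
  have e6 : gv ^ (b + 1) * gu ^ (c + 1) = Wd (gtE b c) := by
    unfold gu gv gtE; exact prodT b c 1 0
  rw [e5, e6]
  exact t3D


end
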